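/- Let n be a natural number with k = ⌈log₂ n⌉ ≥ 2 and 3·2^{k−2} ≤ n ≤ 2^k. Then the minimal Colless index satisfies c(n) = c(n − 2^{k−1}) + (2^k − n). (In particular, the leaf partition (2^{k−1}, n − 2^{k−1}) at the root, with a fully balanced tree of height k−1 as one maximal pending subtree, is realized by a tree with minimal Colless index.) -/
import Mathlib

set_option maxHeartbeats 1000000

/-- Full binary trees: either a single leaf, or a node with two full binary subtrees. -/
inductive FBT : Type
  | leaf : FBT
  | node : FBT → FBT → FBT

namespace FBT

/-- Number of leaves of a full binary tree. -/
def leaves : FBT → ℕ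
  | leaf => 1
  | node a b => leaves a + leaves b

/-- The Colless index: the sum over internal nodes of the absolute difference of the
numbers of leaves of the two maximal pending subtrees. -/
def colless : FBT → ℕ
  | leaf => 0
  | node a b => colless a + colless b + Nat.dist (leaves a) (leaves b)

end FBT

/-- The minimal Colless index over all full binary trees with `n` leaves. -/
noncomputable def minColless (n : ℕ) : ℕ :=
  sInf {m : ℕ | ∃ T : FBT, T.leaves = n ∧ T.colless = m}

namespace MCAux

/-- The Colless index of the maximally balanced tree on `n` leaves. -/
def f (n : ℕ) : ℕ :=
  if h : n ≤ 1 then 0 else f (n / 2) + f ((n + 1) / 2) + n % 2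
termination_by n
decreasing_by all_goals omega

lemma f_low (n : ℕ) (h : n ≤ 1) : f n = 0 := by rw [f, dif_pos h]

lemma f_rec (n : ℕ) (h : 2 ≤ n) : f n = f (n / 2) + f ((n + 1) / 2) + n % 2 := by
  rw [f, dif_neg (by omega)]

/-- Key subadditivity: `f (a + b) ≤ f a + f b + |a - b|`. -/
lemma f_subadd : ∀ n a b, a + b = n → f n ≤ f a + f b + (a - b) + (b - a) := by
  intro n
  induction n using Nat.strong_induction_on with
  | _ n IH =>
  intro a b hab
  have hf1 : f 1 = 0 := f_low 1 (by norm_num)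
  rcases Nat.eq_zero_or_pos a with rfl | ha
  · have : n = b := by omega
    subst this
    have : f 0 = 0 := f_low 0 (by norm_num)
    omega
  rcases Nat.eq_zero_or_pos b with rfl | hb
  · have : n = a := by omega
    subst this
    have : f 0 = 0 := f_low 0 (by norm_num)
    omega
  have hrn := f_rec n (by omega)
  rcases Nat.even_or_odd a with ⟨a', ha'⟩ | ⟨a', ha'⟩ <;>
    rcases Nat.even_or_odd b with ⟨b', hb'⟩ | ⟨b', hb'⟩ <;> subst ha' hb'
  · -- even, even
    have e1 : n / 2 = a' + b' := by omega
    have e2 : (n + 1) / 2 = a' + b' := by omega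
    rw [e1, e2] at hrn
    have hra := f_rec (a' + a') (by omega)
    have ea1 : (a' + a') / 2 = a' := by omega
    have ea2 : (a' + a' + 1) / 2 = a' := by omega
    rw [ea1, ea2] at hra
    have hrb := f_rec (b' + b') (by omega)
    have eb1 : (b' + b') / 2 = b' := by omega
    have eb2 : (b' + b' + 1) / 2 = b' := by omega
    rw [eb1, eb2] at hrb
    have I1 := IH (a' + b') (by omega) a' b' rfl
    omega
  · -- even a, odd b
    have hra := f_rec (a' + a') (by omega)
    have ea1 : (a' + a') / 2 = a' := by omega
    have ea2 : (a' + a' + 1) / 2 = a' := by omega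
    rw [ea1, ea2] at hra
    rcases Nat.eq_zero_or_pos b' with hb0 | hb0
    · -- b = 1
      have e1 : n / 2 = a' := by omega
      have e2 : (n + 1) / 2 = a' + 1 := by omega
      rw [e1, e2] at hrn
      have k3 : f (2 * b' + 1) = 0 := f_low _ (by omega)
      have I := IH (a' + 1) (by omega) a' 1 rfl
      omega
    · have e1 : n / 2 = a' + b' := by omega
      have e2 : (n + 1) / 2 = a' + b' + 1 := by omega
      rw [e1, e2] at hrn
      have hrb := f_rec (2 * b' + 1) (by omega)
      have eb1 : (2 * b' + 1) / 2 = b' := by omega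
      have eb2 : (2 * b' + 1 + 1) / 2 = b' + 1 := by omega
      rw [eb1, eb2] at hrb
      have I1 := IH (a' + b') (by omega) a' b' rfl
      have I2 := IH (a' + b' + 1) (by omega) a' (b' + 1) (by omega)
      omega
  · -- odd a, even b
    have hrb := f_rec (b' + b') (by omega)
    have eb1 : (b' + b') / 2 = b' := by omega
    have eb2 : (b' + b' + 1) / 2 = b' := by omega
    rw [eb1, eb2] at hrb
    rcases Nat.eq_zero_or_pos a' with ha0 | ha0
    · -- a = 1
      have e1 : n / 2 = b' := by omega
      have e2 : (n + 1) / 2 = b' + 1 := by omega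
      rw [e1, e2] at hrn
      have k3 : f (2 * a' + 1) = 0 := f_low _ (by omega)
      have I := IH (b' + 1) (by omega) b' 1 rfl
      omega
    · have e1 : n / 2 = a' + b' := by omega
      have e2 : (n + 1) / 2 = a' + b' + 1 := by omega
      rw [e1, e2] at hrn
      have hra := f_rec (2 * a' + 1) (by omega)
      have ea1 : (2 * a' + 1) / 2 = a' := by omega
      have ea2 : (2 * a' + 1 + 1) / 2 = a' + 1 := by omega
      rw [ea1, ea2] at hra
      have I1 := IH (a' + b') (by omega) a' b' rfl
      have I2 := IH (a' + b' + 1) (by omega) (a' + 1) b' (by omega)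
      omega
  · -- odd, odd
    rcases Nat.eq_zero_or_pos a' with ha0 | ha0 <;>
      rcases Nat.eq_zero_or_pos b' with hb0 | hb0
    · -- a = b = 1, n = 2
      have hn2 : n = 2 := by omega
      subst hn2
      have h2 : f 2 = 0 := by rw [f_rec 2 (by norm_num)]; norm_num [f_low]
      have k3a : f (2 * a' + 1) = 0 := f_low _ (by omega)
      have k3b : f (2 * b' + 1) = 0 := f_low _ (by omega)
      omega
    · -- a = 1, b ≥ 3
      have e1 : n / 2 = b' + 1 := by omega
      have e2 : (n + 1) / 2 = b' + 1 := by omega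
      rw [e1, e2] at hrn
      have hrb := f_rec (2 * b' + 1) (by omega)
      have eb1 : (2 * b' + 1) / 2 = b' := by omega
      have eb2 : (2 * b' + 1 + 1) / 2 = b' + 1 := by omega
      rw [eb1, eb2] at hrb
      have k3a : f (2 * a' + 1) = 0 := f_low _ (by omega)
      have I := IH (b' + 1) (by omega) b' 1 (by omega)
      omega
    · -- a ≥ 3, b = 1
      have e1 : n / 2 = a' + 1 := by omega
      have e2 : (n + 1) / 2 = a' + 1 := by omega
      rw [e1, e2] at hrn
      have hra := f_rec (2 * a' + 1) (by omega)
      have ea1 : (2 * a' + 1) / 2 = a' := by omega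
      have ea2 : (2 * a' + 1 + 1) / 2 = a' + 1 := by omega
      rw [ea1, ea2] at hra
      have k3b : f (2 * b' + 1) = 0 := f_low _ (by omega)
      have I := IH (a' + 1) (by omega) a' 1 (by omega)
      omega
    · have e1 : n / 2 = a' + b' + 1 := by omega
      have e2 : (n + 1) / 2 = a' + b' + 1 := by omega
      rw [e1, e2] at hrn
      have hra := f_rec (2 * a' + 1) (by omega)
      have ea1 : (2 * a' + 1) / 2 = a' := by omega
      have ea2 : (2 * a' + 1 + 1) / 2 = a' + 1 := by omega
      rw [ea1, ea2] at hra
      have hrb := f_rec (2 * b' + 1) (by omega)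
      have eb1 : (2 * b' + 1) / 2 = b' := by omega
      have eb2 : (2 * b' + 1 + 1) / 2 = b' + 1 := by omega
      rw [eb1, eb2] at hrb
      have I1 := IH (a' + b' + 1) (by omega) (a' + 1) b' (by omega)
      have I2 := IH (a' + b' + 1) (by omega) a' (b' + 1) (by omega)
      omega

/-- The maximally balanced tree on `n` leaves. -/
def mbt (n : ℕ) : FBT :=
  if h : n ≤ 1 then FBT.leaf else FBT.node (mbt (n / 2)) (mbt ((n + 1) / 2))
termination_by n
decreasing_by all_goals omega

lemma mbt_leaves : ∀ n, 1 ≤ n → (mbt n).leaves = n := by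
  intro n
  induction n using Nat.strong_induction_on with
  | _ n IH =>
  intro hn
  rw [mbt]
  by_cases h : n ≤ 1
  · rw [dif_pos h]; have : n = 1 := (by omega); subst this; rfl
  · rw [dif_neg h, FBT.leaves, IH (n / 2) (by omega) (by omega),
      IH ((n + 1) / 2) (by omega) (by omega)]
    omega

lemma mbt_colless : ∀ n, 1 ≤ n → (mbt n).colless = f n := by
  intro n
  induction n using Nat.strong_induction_on with
  | _ n IH =>
  intro hn
  rw [mbt]
  by_cases h : n ≤ 1
  · rw [dif_pos h]; have : n = 1 := (by omega); subst this; rw [f_low 1 (by norm_num)]; rfl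
  · rw [dif_neg h, FBT.colless, IH (n / 2) (by omega) (by omega),
      IH ((n + 1) / 2) (by omega) (by omega),
      mbt_leaves (n / 2) (by omega), mbt_leaves ((n + 1) / 2) (by omega),
      f_rec n (by omega)]
    have : Nat.dist (n / 2) ((n + 1) / 2) = n % 2 := by
      rw [Nat.dist]; omega
    omega

/-- Lower bound: every tree on `n` leaves has Colless index at least `f n`. -/
lemma colless_lower : ∀ T : FBT, f T.leaves ≤ T.colless := by
  intro T
  induction T with
  | leaf =>
    rw [FBT.leaves, FBT.colless, f_low 1 (by norm_num)]
  | node a b iha ihb =>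
    rw [FBT.leaves, FBT.colless]
    have h := f_subadd (a.leaves + b.leaves) a.leaves b.leaves rfl
    have hd : Nat.dist a.leaves b.leaves
        = (a.leaves - b.leaves) + (b.leaves - a.leaves) := by
      rw [Nat.dist]
    omega

lemma minColless_eq_f (n : ℕ) (h : 1 ≤ n) : minColless n = f n := by
  have hmem : f n ∈ {m : ℕ | ∃ T : FBT, T.leaves = n ∧ T.colless = m} :=
    ⟨mbt n, mbt_leaves n h, mbt_colless n h⟩
  refine le_antisymm (Nat.sInf_le hmem) (le_csInf ⟨_, hmem⟩ ?_)
  rintro m ⟨T, hL, hC⟩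
  subst hC
  rw [← hL]
  exact colless_lower T

/-- The interval identity for `f`. -/
lemma f_interval : ∀ j n, 3 * 2 ^ j ≤ n → n ≤ 2 ^ (j + 2) →
    f n = f (n - 2 ^ (j + 1)) + (2 ^ (j + 2) - n) := by
  intro j
  induction j with
  | zero =>
    intro n h1 h2
    norm_num at h1 h2 ⊢
    have f1 : f 1 = 0 := f_low 1 (by norm_num)
    have f2 : f 2 = 0 := by rw [f_rec 2 (by norm_num)]; norm_num [f_low]
    have f3 : f 3 = 1 := by rw [f_rec 3 (by norm_num)]; norm_num [f_low, f2]
    have f4 : f 4 = 0 := by rw [f_rec 4 (by norm_num)]; norm_num [f2, f_low]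
    interval_cases n <;> simp [f1, f2, f3, f4]
  | succ j IH =>
    intro n h1 h2
    have Q1 : (2 : ℕ) ^ (j + 1) = 2 * 2 ^ j := by ring
    have Q2 : (2 : ℕ) ^ (j + 1 + 1) = 2 * 2 ^ (j + 1) := by ring
    have Q3 : (2 : ℕ) ^ (j + 1 + 2) = 2 * 2 ^ (j + 2) := by ring
    have Q4 : (2 : ℕ) ^ (j + 2) = 2 * 2 ^ (j + 1) := by ring
    have h0 : 1 ≤ (2 : ℕ) ^ j := Nat.one_le_two_pow
    have hrn := f_rec n (by omega)
    have I1 := IH (n / 2) (by omega) (by omega)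
    have I2 := IH ((n + 1) / 2) (by omega) (by omega)
    have hrm := f_rec (n - 2 ^ (j + 1 + 1)) (by omega)
    have em1 : (n - 2 ^ (j + 1 + 1)) / 2 = n / 2 - 2 ^ (j + 1) := by omega
    have em2 : (n - 2 ^ (j + 1 + 1) + 1) / 2 = (n + 1) / 2 - 2 ^ (j + 1) := by omega
    rw [em1, em2] at hrm
    omega

end MCAux

theorem minColless_second_interval (n : ℕ) (k : ℕ) (hk : k = Nat.clog 2 n) (hk2 : 2 ≤ k)
    (h1 : 3 * 2 ^ (k - 2) ≤ n) (h2 : n ≤ 2 ^ k) :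
    minColless n = minColless (n - 2 ^ (k - 1)) + (2 ^ k - n) := by
  obtain ⟨j, rfl⟩ : ∃ j, k = j + 2 := ⟨k - 2, by omega⟩
  have e1 : j + 2 - 1 = j + 1 := by omega
  have e2 : j + 2 - 2 = j := by omega
  rw [e1]
  rw [e2] at h1
  have h0 : 1 ≤ (2 : ℕ) ^ j := Nat.one_le_two_pow
  have Q1 : (2 : ℕ) ^ (j + 1) = 2 * 2 ^ j := by ring
  have Q2 : (2 : ℕ) ^ (j + 2) = 2 * 2 ^ (j + 1) := by ring
  have hn1 : 1 ≤ n := by omega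
  have hm1 : 1 ≤ n - 2 ^ (j + 1) := by omega
  rw [MCAux.minColless_eq_f n hn1, MCAux.minColless_eq_f _ hm1]
  exact MCAux.f_interval j n h1 h2
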